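/- For all $p \in [0,1]$ and all $x \ge 0$, the inequality $px + \log(1 - p + p e^{-x}) \le p x^2 / 2$ holds. -/

import Mathlib

lemma exp_neg_quad (x : ℝ) (hx : 0 ≤ x) : Real.exp (-x) ≤ 1 - x + x ^ 2 / 2 := by
  have h : MonotoneOn (fun t : ℝ => 1 - t + t ^ 2 / 2 - Real.exp (-t)) (Set.Ici 0) := by
    apply monotoneOn_of_deriv_nonneg (convex_Ici 0)
    · fun_prop
    · fun_prop
    · intro t ht
      have ht' : 0 ≤ t := by
        simpa using interior_subset (s := Set.Ici (0:ℝ)) ht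
      have h1 : HasDerivAt (fun t : ℝ => Real.exp (-t)) (-Real.exp (-t)) t := by
        simpa [Function.comp_def] using (Real.hasDerivAt_exp (-t)).comp t (hasDerivAt_neg t)
      have h2 := (((hasDerivAt_id t).const_sub 1).add ((hasDerivAt_pow 2 t).div_const 2)).sub h1
      have H : HasDerivAt (fun t : ℝ => 1 - t + t ^ 2 / 2 - Real.exp (-t))
          (-1 + t + Real.exp (-t)) t := by
        refine HasDerivAt.congr_deriv (f := fun t : ℝ => 1 - t + t ^ 2 / 2 - Real.exp (-t)) h2 ?_
        push_cast
        ring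
      rw [H.deriv]
      have := Real.add_one_le_exp (-t)
      nlinarith [Real.exp_pos (-t)]
  have h0 := h (Set.self_mem_Ici) (Set.mem_Ici.mpr hx) hx
  simp at h0
  linarith

theorem stmt1 (p x : ℝ) (hp : p ∈ Set.Icc (0 : ℝ) 1) (hx : 0 ≤ x) :
    p * x + Real.log (1 - p + p * Real.exp (-x)) ≤ p * x ^ 2 / 2 := by
  obtain ⟨hp0, hp1⟩ := hp
  have hex : 0 < Real.exp (-x) := Real.exp_pos _
  have hex1 : Real.exp (-x) ≤ 1 := Real.exp_le_one_iff.mpr (by linarith)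
  have hpos : 0 < 1 - p + p * Real.exp (-x) := by nlinarith
  have hlog : Real.log (1 - p + p * Real.exp (-x)) ≤ -p + p * Real.exp (-x) := by
    have := Real.log_le_sub_one_of_pos hpos
    linarith
  have hq := exp_neg_quad x hx
  nlinarith [mul_nonneg hp0 hx]
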